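/- Let φ be a setfunction on a set algebra (J, 𝓑), and let k ≥ 1 and b ≥ 2^k. Then T_k(φ) = T_k(Q_b(φ)): every k-crop of φ equals a k-crop of some b-quotient of φ. -/

import Mathlib

/-- The `k`-crop of a setfunction `φ` along a tuple `A` of sets:
`(φ/A)(I) = φ(⋃_{i∈I} A_i)`. -/
def cropFn {J : Type*} (φ : Set J → ℝ) {k : ℕ} (A : Fin k → Set J) :
    Finset (Fin k) → ℝ :=
  fun I => φ (⋃ i ∈ I, A i)

/-- The set `T_k(φ)` of `k`-crops of `φ`, over tuples of sets from the family `B`. -/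
def crops {J : Type*} (B : Set (Set J)) (φ : Set J → ℝ) (k : ℕ) :
    Set (Finset (Fin k) → ℝ) :=
  {ψ | ∃ A : Fin k → Set J, (∀ i, A i ∈ B) ∧ ψ = cropFn φ A}

/-- The set `Q_b(φ)` of `b`-quotients of `φ`: crops along partitions of `J` into `b`
(possibly empty) sets from `B`. -/
def quotients {J : Type*} (B : Set (Set J)) (φ : Set J → ℝ) (b : ℕ) :
    Set (Finset (Fin b) → ℝ) :=
  {ψ | ∃ A : Fin b → Set J, (∀ i, A i ∈ B) ∧ Pairwise (Function.onFun Disjoint A) ∧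
      (⋃ i, A i) = Set.univ ∧ ψ = cropFn φ A}

/-- The set `T_k(ψ)` of `k`-crops of a setfunction `ψ : 2^[b] → ℝ`. -/
def cropsFin {b : ℕ} (ψ : Finset (Fin b) → ℝ) (k : ℕ) :
    Set (Finset (Fin k) → ℝ) :=
  {σ | ∃ P : Fin k → Finset (Fin b), σ = fun I => ψ (I.biUnion P)}

/-- For a setfunction `φ` on a set algebra `(J, B)`, `k ≥ 1` and
`b ≥ 2^k`, we have `T_k(φ) = T_k(Q_b(φ))`. -/
theorem stmt3 {J : Type*} (B : Set (Set J)) (φ : Set J → ℝ)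
    (hempty : ∅ ∈ B) (huniv : Set.univ ∈ B)
    (hunion : ∀ X Y, X ∈ B → Y ∈ B → X ∪ Y ∈ B)
    (hinter : ∀ X Y, X ∈ B → Y ∈ B → X ∩ Y ∈ B)
    (hcompl : ∀ X, X ∈ B → Xᶜ ∈ B)
    (hφ : φ ∅ = 0)
    (k b : ℕ) (hk : 1 ≤ k) (hb : 2 ^ k ≤ b) :
    crops B φ k = ⋃ ψ ∈ quotients B φ b, cropsFin ψ k := by
  classical
  have hBUnion : ∀ (s : Finset (Fin b)) (f : Fin b → Set J),
      (∀ i ∈ s, f i ∈ B) → (⋃ i ∈ s, f i) ∈ B := by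
    intro s f hf
    induction s using Finset.induction_on with
    | empty => simpa using hempty
    | insert _ _ hx ih =>
      rw [Finset.set_biUnion_insert]
      exact hunion _ _ (hf _ (Finset.mem_insert_self _ _))
        (ih fun i hi => hf i (Finset.mem_insert_of_mem hi))
  have hBInter : ∀ (s : Finset (Fin k)) (f : Fin k → Set J),
      (∀ i ∈ s, f i ∈ B) → (⋂ i ∈ s, f i) ∈ B := by
    intro s f hf
    induction s using Finset.induction_on with
    | empty => simpa using huniv
    | insert _ _ hx ih =>
      rw [Finset.set_biInter_insert]
      exact hinter _ _ (hf _ (Finset.mem_insert_self _ _))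
        (ih fun i hi => hf i (Finset.mem_insert_of_mem hi))
  ext σ
  simp only [Set.mem_iUnion, exists_prop]
  constructor
  · rintro ⟨A, hA, rfl⟩
    set C : Finset (Fin k) → Set J := fun S => ⋂ i, (if i ∈ S then A i else (A i)ᶜ) with hC
    have memC : ∀ (S : Finset (Fin k)) (x : J), x ∈ C S ↔ ∀ i, (x ∈ A i ↔ i ∈ S) := by
      intro S x
      simp only [hC, Set.mem_iInter]
      constructor
      · intro h i
        have := h i
        by_cases hi : i ∈ S <;> simp [hi] at this ⊢ <;> tauto
      · intro h i
        by_cases hi : i ∈ S <;> simp [hi, h i]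
    have hCB : ∀ S, C S ∈ B := by
      intro S
      have : C S = ⋂ i ∈ (Finset.univ : Finset (Fin k)), (if i ∈ S then A i else (A i)ᶜ) := by
        simp [hC]
      rw [this]
      refine hBInter _ _ fun i _ => ?_
      split
      · exact hA i
      · exact hcompl _ (hA i)
    have hatom : ∀ x : J, x ∈ C (Finset.univ.filter (fun i => x ∈ A i)) := by
      intro x
      rw [memC]
      intro i
      simp
    have hdisjC : ∀ S T : Finset (Fin k), S ≠ T → Disjoint (C S) (C T) := by
      intro S T hST
      rw [Set.disjoint_left]
      intro x hxS hxT
      apply hST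
      ext i
      rw [← (memC S x).1 hxS i, (memC T x).1 hxT i]
    obtain ⟨e⟩ : Nonempty (Finset (Fin k) ↪ Fin b) := by
      apply Function.Embedding.nonempty_of_card_le
      simpa using hb
    set D : Fin b → Set J := fun m => if h : ∃ S, e S = m then C h.choose else ∅ with hDdef
    have hDe : ∀ S, D (e S) = C S := by
      intro S
      have h : ∃ S', e S' = e S := ⟨S, rfl⟩
      have hs := h.choose_spec
      simp only [hDdef, dif_pos h]
      rw [e.injective hs]
    refine ⟨cropFn φ D, ⟨D, ?_, ?_, ?_, rfl⟩, ?_⟩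
    · intro m
      by_cases h : ∃ S, e S = m
      · simp only [hDdef, dif_pos h]; exact hCB _
      · simp only [hDdef, dif_neg h]; exact hempty
    · intro m m' hne
      simp only [Function.onFun, hDdef]
      split_ifs with h1 h2 h2
      · apply hdisjC
        intro hST
        apply hne
        rw [← h1.choose_spec, ← h2.choose_spec, hST]
      all_goals simp
    · apply Set.eq_univ_of_forall
      intro x
      refine Set.mem_iUnion.2 ⟨e (Finset.univ.filter (fun i => x ∈ A i)), ?_⟩
      rw [hDe]
      exact hatom x
    · refine ⟨fun j => (Finset.univ.filter (fun S => j ∈ S)).image e, ?_⟩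
      funext I
      simp only [cropFn]
      congr 1
      ext x
      simp only [Set.mem_iUnion, Finset.mem_biUnion, Finset.mem_image, Finset.mem_filter,
        Finset.mem_univ, true_and, exists_prop]
      constructor
      · rintro ⟨i, hiI, hx⟩
        refine ⟨e (Finset.univ.filter (fun j => x ∈ A j)),
          ⟨i, hiI, Finset.univ.filter (fun j => x ∈ A j), by simp [hx], rfl⟩, ?_⟩
        rw [hDe]
        exact hatom x
      · rintro ⟨m, ⟨i, hiI, S, hiS, rfl⟩, hx⟩
        rw [hDe] at hx
        exact ⟨i, hiI, ((memC S x).1 hx i).2 hiS⟩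
  · rintro ⟨ψ, ⟨D, hD, hdisj, hcover, rfl⟩, P, rfl⟩
    refine ⟨fun i => ⋃ m ∈ P i, D m, fun i => hBUnion _ _ fun m _ => hD m, ?_⟩
    funext I
    simp only [cropFn]
    congr 1
    ext x
    simp only [Set.mem_iUnion, Finset.mem_biUnion, exists_prop]
    tauto
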